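/- Let Σ ∈ ℝ^{2d×2d} be symmetric positive definite with block decomposition Σ = [[Σ_xx, Σ_xy], [Σ_yx, Σ_yy]] into d×d blocks, let θ* = (θ*_xᵀ, 0ᵀ)ᵀ ∈ ℝ^{2d} with ‖θ*‖₂ = 1, let P_y be the orthogonal projector onto the last d coordinates, and let S := Σ_yy − Σ_yx Σ_xx^{-1} Σ_xy be the Schur complement of Σ with respect to Σ_xx. Then, for every τ > 0, the quantity C^Σ := θ*ᵀ Σ (Σ + τI)^{-1} P_y Σ θ* satisfies |C^Σ| ≤ min( ‖Σ_yx‖_op, λmax(Σ)²/τ, τ · √(θ*_xᵀ Σ_xx θ*_x) · (λmax(Σ_yy) − λmin(S)) / (λmin(S) · √(λmin(Σ_xx))) ). -/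

import Mathlib

open MeasureTheory ProbabilityTheory Matrix Real

noncomputable section

/-- Squared Euclidean norm of a vector. -/
def sqNorm {m : Type*} [Fintype m] (v : m → ℝ) : ℝ := ∑ i, v i ^ 2

/-- Smallest eigenvalue of a symmetric matrix, via the Rayleigh quotient. -/
def lmin {m : Type*} [Fintype m] (A : Matrix m m ℝ) : ℝ :=
  ⨅ v : {v : m → ℝ // sqNorm v = 1}, dotProduct v.1 (A.mulVec v.1)

/-- Largest eigenvalue of a symmetric matrix, via the Rayleigh quotient. -/
def lmax {m : Type*} [Fintype m] (A : Matrix m m ℝ) : ℝ :=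
  ⨆ v : {v : m → ℝ // sqNorm v = 1}, dotProduct v.1 (A.mulVec v.1)

/-- Operator (spectral) norm of a rectangular matrix. -/
def opNorm {m n : Type*} [Fintype m] [Fintype n] (A : Matrix m n ℝ) : ℝ :=
  ⨆ v : {v : n → ℝ // sqNorm v = 1}, Real.sqrt (sqNorm (A.mulVec v.1))

/-- Projector onto the last `d` coordinates (the spurious feature `y`). -/
def Py (d : ℕ) : Matrix (Fin d ⊕ Fin d) (Fin d ⊕ Fin d) ℝ :=
  Matrix.fromBlocks 0 0 0 1

section aux
variable {m n : Type*} [Fintype m] [Fintype n]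

lemma sqNorm_nonneg (v : m → ℝ) : 0 ≤ sqNorm v :=
  Finset.sum_nonneg fun _ _ => sq_nonneg _

lemma sqNorm_eq_dot (v : m → ℝ) : sqNorm v = dotProduct v v := by
  simp [sqNorm, dotProduct, pow_two]

lemma sqNorm_eq_zero {v : m → ℝ} (h : sqNorm v = 0) : v = 0 := by
  funext i
  have h2 := (Finset.sum_eq_zero_iff_of_nonneg (fun i _ => sq_nonneg (v i))).1 h i
    (Finset.mem_univ i)
  simpa using pow_eq_zero_iff (n := 2) (by norm_num) |>.1 h2

lemma sqNorm_pos {v : m → ℝ} (h : v ≠ 0) : 0 < sqNorm v :=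
  lt_of_le_of_ne (sqNorm_nonneg v) (fun h' => h (sqNorm_eq_zero h'.symm))

lemma abs_dot_le (u v : m → ℝ) :
    |dotProduct u v| ≤ Real.sqrt (sqNorm u) * Real.sqrt (sqNorm v) := by
  rw [← Real.sqrt_mul (sqNorm_nonneg u)]
  rw [← Real.sqrt_sq_eq_abs]
  apply Real.sqrt_le_sqrt
  exact Finset.sum_mul_sq_le_sq_mul_sq _ _ _

lemma dot_le (u v : m → ℝ) :
    dotProduct u v ≤ Real.sqrt (sqNorm u) * Real.sqrt (sqNorm v) :=
  le_trans (le_abs_self _) (abs_dot_le u v)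

lemma abs_coord_le {v : m → ℝ} (h : sqNorm v = 1) (i : m) : |v i| ≤ 1 := by
  have : v i ^ 2 ≤ 1 := by
    rw [← h]
    exact Finset.single_le_sum (f := fun j => v j ^ 2) (fun j _ => sq_nonneg _)
      (Finset.mem_univ i)
  nlinarith [abs_nonneg (v i), sq_abs (v i)]

lemma bddAbove_quad (A : Matrix m m ℝ) :
    BddAbove (Set.range fun v : {v : m → ℝ // sqNorm v = 1} =>
      dotProduct v.1 (A.mulVec v.1)) := by
  refine ⟨∑ i, ∑ j, |A i j|, ?_⟩
  rintro x ⟨⟨v, hv⟩, rfl⟩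
  calc dotProduct v (A.mulVec v) ≤ |dotProduct v (A.mulVec v)| := le_abs_self _
    _ ≤ ∑ i, ∑ j, |A i j| := by
        simp only [dotProduct, Matrix.mulVec, Finset.mul_sum]
        refine le_trans (Finset.abs_sum_le_sum_abs _ _) (Finset.sum_le_sum fun i _ => ?_)
        refine le_trans (Finset.abs_sum_le_sum_abs _ _) (Finset.sum_le_sum fun j _ => ?_)
        rw [abs_mul, abs_mul]
        calc |v i| * (|A i j| * |v j|) ≤ 1 * (|A i j| * 1) := by
              apply mul_le_mul (abs_coord_le hv i) _ (by positivity) zero_le_one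
              exact mul_le_mul_of_nonneg_left (abs_coord_le hv j) (abs_nonneg _)
          _ = |A i j| := by ring

lemma bddBelow_quad (A : Matrix m m ℝ) :
    BddBelow (Set.range fun v : {v : m → ℝ // sqNorm v = 1} =>
      dotProduct v.1 (A.mulVec v.1)) := by
  obtain ⟨c, hc⟩ := bddAbove_quad (-A)
  refine ⟨-c, ?_⟩
  rintro x ⟨⟨v, hv⟩, rfl⟩
  have := hc (Set.mem_range_self (f := fun v : {v : m → ℝ // sqNorm v = 1} =>
    dotProduct v.1 ((-A).mulVec v.1)) ⟨v, hv⟩)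
  simp only [Matrix.neg_mulVec, dotProduct_neg] at this
  linarith

lemma bddAbove_op (A : Matrix m n ℝ) :
    BddAbove (Set.range fun v : {v : n → ℝ // sqNorm v = 1} =>
      Real.sqrt (sqNorm (A.mulVec v.1))) := by
  refine ⟨Real.sqrt (∑ i, (∑ j, |A i j|) ^ 2), ?_⟩
  rintro x ⟨⟨v, hv⟩, rfl⟩
  apply Real.sqrt_le_sqrt
  refine Finset.sum_le_sum fun i _ => ?_
  rw [← sq_abs (A.mulVec v i)]
  apply pow_le_pow_left₀ (abs_nonneg _)
  refine le_trans (Finset.abs_sum_le_sum_abs _ _) (Finset.sum_le_sum fun j _ => ?_)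
  rw [abs_mul]
  exact le_trans (mul_le_mul_of_nonneg_left (abs_coord_le hv j) (abs_nonneg _)) (by simp)

lemma quad_le_lmax (A : Matrix m m ℝ) (v : m → ℝ) :
    dotProduct v (A.mulVec v) ≤ lmax A * sqNorm v := by
  rcases eq_or_ne v 0 with rfl | hv
  · simp [sqNorm]
  · have hs : 0 < sqNorm v := sqNorm_pos hv
    set s := sqNorm v with hsdef
    set w : m → ℝ := (Real.sqrt s)⁻¹ • v with hw
    have hinv : (Real.sqrt s)⁻¹ ^ 2 = s⁻¹ := by
      rw [← Real.sqrt_inv]; exact Real.sq_sqrt (by positivity)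
    have hsum : ∑ i, v i ^ 2 = s := hsdef.symm
    have hws : sqNorm w = 1 := by
      simp only [hw, sqNorm, Pi.smul_apply, smul_eq_mul, mul_pow]
      rw [← Finset.mul_sum, hinv, hsum]
      exact inv_mul_cancel₀ hs.ne'
    have key : dotProduct w (A.mulVec w) ≤ lmax A :=
      le_ciSup (bddAbove_quad A) (⟨w, hws⟩ : {v : m → ℝ // sqNorm v = 1})
    have hww : dotProduct w (A.mulVec w) = s⁻¹ * dotProduct v (A.mulVec v) := by
      simp only [hw, Matrix.mulVec_smul, dotProduct_smul, smul_dotProduct,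
        smul_eq_mul, ← mul_assoc]
      congr 1
      rw [← mul_inv]
      congr 1
      exact Real.mul_self_sqrt hs.le
    rw [hww] at key
    calc dotProduct v (A.mulVec v) = s * (s⁻¹ * dotProduct v (A.mulVec v)) := by
          field_simp
      _ ≤ s * lmax A := mul_le_mul_of_nonneg_left key hs.le
      _ = lmax A * s := mul_comm _ _

lemma lmin_smul_le_quad (A : Matrix m m ℝ) (v : m → ℝ) :
    lmin A * sqNorm v ≤ dotProduct v (A.mulVec v) := by
  rcases eq_or_ne v 0 with rfl | hv
  · simp [sqNorm]
  · have hs : 0 < sqNorm v := sqNorm_pos hv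
    set s := sqNorm v with hsdef
    set w : m → ℝ := (Real.sqrt s)⁻¹ • v with hw
    have hinv : (Real.sqrt s)⁻¹ ^ 2 = s⁻¹ := by
      rw [← Real.sqrt_inv]; exact Real.sq_sqrt (by positivity)
    have hsum : ∑ i, v i ^ 2 = s := hsdef.symm
    have hws : sqNorm w = 1 := by
      simp only [hw, sqNorm, Pi.smul_apply, smul_eq_mul, mul_pow]
      rw [← Finset.mul_sum, hinv, hsum]
      exact inv_mul_cancel₀ hs.ne'
    have key : lmin A ≤ dotProduct w (A.mulVec w) :=
      ciInf_le (bddBelow_quad A) (⟨w, hws⟩ : {v : m → ℝ // sqNorm v = 1})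
    have hww : dotProduct w (A.mulVec w) = s⁻¹ * dotProduct v (A.mulVec v) := by
      simp only [hw, Matrix.mulVec_smul, dotProduct_smul, smul_dotProduct,
        smul_eq_mul, ← mul_assoc]
      congr 1
      rw [← mul_inv]
      congr 1
      exact Real.mul_self_sqrt hs.le
    rw [hww] at key
    calc lmin A * s = s * lmin A := mul_comm _ _
      _ ≤ s * (s⁻¹ * dotProduct v (A.mulVec v)) := mul_le_mul_of_nonneg_left key hs.le
      _ = dotProduct v (A.mulVec v) := by field_simp

lemma sqrt_sqNorm_mulVec_le_opNorm (A : Matrix m n ℝ) {v : n → ℝ} (hv : sqNorm v = 1) :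
    Real.sqrt (sqNorm (A.mulVec v)) ≤ opNorm A :=
  le_ciSup (bddAbove_op A) (⟨v, hv⟩ : {v : n → ℝ // sqNorm v = 1})


lemma continuous_quad (A : Matrix m m ℝ) :
    Continuous fun v : m → ℝ => dotProduct v (A.mulVec v) := by
  simp only [dotProduct, Matrix.mulVec]
  refine continuous_finset_sum _ fun i _ => (continuous_apply i).mul ?_
  exact continuous_finset_sum _ fun j _ => continuous_const.mul (continuous_apply j)

lemma isCompact_unitSphere : IsCompact {v : m → ℝ | sqNorm v = 1} := by
  have hcont : Continuous fun v : m → ℝ => sqNorm v :=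
    continuous_finset_sum _ fun i _ => (continuous_apply i).pow 2
  apply Metric.isCompact_of_isClosed_isBounded
  · exact isClosed_singleton.preimage hcont
  · apply Metric.isBounded_iff_subset_closedBall (0 : m → ℝ) |>.2
    refine ⟨1, fun v hv => ?_⟩
    simp only [Metric.mem_closedBall, dist_zero_right]
    rw [pi_norm_le_iff_of_nonneg zero_le_one]
    intro i
    exact (Real.norm_eq_abs _).symm ▸ abs_coord_le hv i

lemma exists_unit (hm : Nonempty m) : ∃ v : m → ℝ, sqNorm v = 1 := by
  obtain ⟨i⟩ := hm
  classical
  refine ⟨Pi.single i 1, ?_⟩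
  simp only [sqNorm]
  rw [Finset.sum_eq_single i]
  · simp
  · intro j _ hj; simp [Pi.single_eq_of_ne hj]
  · simp

lemma lmin_pos_of_posDef [Nonempty m] {A : Matrix m m ℝ} (hA : A.PosDef) : 0 < lmin A := by
  classical
  obtain ⟨v₁, hv₁⟩ := exists_unit (inferInstance : Nonempty m)
  obtain ⟨v₀, hv₀K, hmin⟩ := isCompact_unitSphere.exists_isMinOn ⟨v₁, hv₁⟩
    (continuous_quad A).continuousOn
  have hv₀ : v₀ ≠ 0 := by
    intro h
    rw [Set.mem_setOf_eq, h] at hv₀K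
    simp [sqNorm] at hv₀K
  have h₀ : 0 < dotProduct v₀ (A.mulVec v₀) := by
    have := hA.dotProduct_mulVec_pos hv₀
    simpa using this
  haveI : Nonempty {v : m → ℝ // sqNorm v = 1} := ⟨⟨v₁, hv₁⟩⟩
  refine lt_of_lt_of_le h₀ (le_ciInf fun w => isMinOn_iff.mp hmin w.1 w.2)

lemma dot_mulVec_symm {A : Matrix m m ℝ} (hA : Aᵀ = A) (u v : m → ℝ) :
    dotProduct u (A.mulVec v) = dotProduct (A.mulVec u) v := by
  rw [Matrix.dotProduct_mulVec]
  congr 1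
  rw [← Matrix.vecMul_transpose, hA]

lemma pd_cauchy [DecidableEq m] {M : Matrix m m ℝ} (hM : M.PosDef) (a b : m → ℝ) :
    dotProduct a b ^ 2 ≤
      dotProduct a (M⁻¹.mulVec a) * dotProduct b (M.mulVec b) := by
  classical
  rcases eq_or_ne b 0 with rfl | hb
  · simp
  · have hβ : 0 < dotProduct b (M.mulVec b) := by simpa using hM.dotProduct_mulVec_pos hb
    set α := dotProduct a (M⁻¹.mulVec a) with hα
    set β := dotProduct b (M.mulVec b) with hβd
    set γ := dotProduct a b with hγ
    set t := γ / β with ht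
    set q : m → ℝ := a - t • M.mulVec b with hq
    have hMb : M⁻¹.mulVec (M.mulVec b) = b := by
      rw [Matrix.mulVec_mulVec, Matrix.nonsing_inv_mul M hM.det_pos.ne'.isUnit,
        Matrix.one_mulVec]
    have h0 : 0 ≤ dotProduct q (M⁻¹.mulVec q) := by
      simpa using hM.inv.posSemidef.dotProduct_mulVec_nonneg q
    have hexp : dotProduct q (M⁻¹.mulVec q) = α - 2 * t * γ + t ^ 2 * β := by
      simp only [hq, Matrix.mulVec_sub, Matrix.mulVec_smul, sub_dotProduct,
        dotProduct_sub, smul_dotProduct, dotProduct_smul,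
        smul_eq_mul, hMb]
      have hsym : (M⁻¹)ᵀ = M⁻¹ := by
        simpa [Matrix.conjTranspose_eq_transpose_of_trivial] using hM.inv.isHermitian.eq
      have h1 : dotProduct (M.mulVec b) (M⁻¹.mulVec a) = γ := by
        rw [dot_mulVec_symm hsym (M.mulVec b) a, hMb, dotProduct_comm]
      have h2 : dotProduct (M.mulVec b) b = β := dotProduct_comm _ _
      rw [h1, hγ, h2]
      ring
    rw [hexp] at h0
    have : γ ^ 2 / β ≤ α := by
      rw [ht] at h0
      have e : 2 * (γ / β) * γ = 2 * (γ ^ 2 / β) := by ring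
      have e2 : (γ / β) ^ 2 * β = γ ^ 2 / β := by
        field_simp
      linarith
    calc γ ^ 2 = γ ^ 2 / β * β := by field_simp
      _ ≤ α * β := mul_le_mul_of_nonneg_right this hβ.le

lemma mulVec_dot (A : Matrix m n ℝ) (x : n → ℝ) (y : m → ℝ) :
    dotProduct (A.mulVec x) y = dotProduct x (Aᵀ.mulVec y) := by
  rw [dotProduct_comm, Matrix.dotProduct_mulVec, ← Matrix.mulVec_transpose,
    dotProduct_comm]

lemma sqNorm_add (x y : m → ℝ) :
    sqNorm (x + y) = sqNorm x + 2 * dotProduct x y + sqNorm y := by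
  simp only [sqNorm_eq_dot, dotProduct_add, add_dotProduct]
  rw [dotProduct_comm y x]
  ring

lemma psd_cauchy {A : Matrix m m ℝ} (hA : Aᵀ = A) (hpsd : ∀ x, 0 ≤ dotProduct x (A.mulVec x))
    (a b : m → ℝ) :
    dotProduct a (A.mulVec b) ^ 2 ≤
      dotProduct a (A.mulVec a) * dotProduct b (A.mulVec b) := by
  set α := dotProduct a (A.mulVec a) with hα
  set β := dotProduct b (A.mulVec b) with hβ
  set γ := dotProduct a (A.mulVec b) with hγ
  have hcross : dotProduct b (A.mulVec a) = γ := by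
    rw [dot_mulVec_symm hA, dotProduct_comm]
  have hexp : ∀ t : ℝ, 0 ≤ α - 2 * t * γ + t ^ 2 * β := by
    intro t
    have h0 := hpsd (a - t • b)
    simp only [Matrix.mulVec_sub, Matrix.mulVec_smul, sub_dotProduct,
      dotProduct_sub, smul_dotProduct, dotProduct_smul, smul_eq_mul,
      hcross, ← hα, ← hβ, ← hγ] at h0
    linarith [h0]
  have hβ0 : 0 ≤ β := hpsd b
  rcases eq_or_lt_of_le hβ0 with hβz | hβpos
  · have hγ0 : γ = 0 := by
      by_contra hne
      have h1 := hexp ((α + 1) / (2 * γ))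
      rw [← hβz] at h1
      have : α - 2 * ((α + 1) / (2 * γ)) * γ = -1 := by
        field_simp
        ring
      nlinarith [hpsd a]
    rw [hγ0]
    nlinarith [hpsd a]
  · have h1 := hexp (γ / β)
    have e2 : (γ / β) ^ 2 * β = γ ^ 2 / β := by field_simp
    have e : 2 * (γ / β) * γ = 2 * (γ ^ 2 / β) := by ring
    have : γ ^ 2 / β ≤ α := by linarith
    calc γ ^ 2 = γ ^ 2 / β * β := by field_simp
      _ ≤ α * β := mul_le_mul_of_nonneg_right this hβpos.le

lemma sqNorm_mulVec_le_of_symm {A : Matrix m m ℝ} (hA : Aᵀ = A)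
    (hpsd : ∀ x, 0 ≤ dotProduct x (A.mulVec x)) (hl : 0 ≤ lmax A) (v : m → ℝ) :
    sqNorm (A.mulVec v) ≤ lmax A ^ 2 * sqNorm v := by
  set q := A.mulVec v with hq
  have h1 : sqNorm q = dotProduct v (A.mulVec q) := by
    rw [sqNorm_eq_dot, hq, dot_mulVec_symm hA v q]
  have h2 := psd_cauchy hA hpsd v q
  have h3 : dotProduct v (A.mulVec v) ≤ lmax A * sqNorm v := quad_le_lmax A v
  have h4 : dotProduct q (A.mulVec q) ≤ lmax A * sqNorm q := quad_le_lmax A q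
  have h5 : (sqNorm q) ^ 2 ≤ (lmax A * sqNorm v) * (lmax A * sqNorm q) := by
    have he : sqNorm q ^ 2 = dotProduct v (A.mulVec q) ^ 2 := by rw [h1]
    rw [he]
    exact le_trans h2 (mul_le_mul h3 h4 (hpsd q) ((hpsd v).trans h3))
  rcases eq_or_lt_of_le (sqNorm_nonneg q) with hz | hz
  · rw [← hz]
    exact mul_nonneg (sq_nonneg _) (sqNorm_nonneg v)
  · nlinarith [h5, hz]

lemma herm_of_symm {A : Matrix m m ℝ} (h : Aᵀ = A) : A.IsHermitian := by
  rw [Matrix.IsHermitian, Matrix.conjTranspose_eq_transpose_of_trivial, h]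

lemma symm_of_herm {A : Matrix m m ℝ} (h : A.IsHermitian) : Aᵀ = A := by
  rw [← Matrix.conjTranspose_eq_transpose_of_trivial]
  exact h

lemma posDef_of_symm_quad {A : Matrix m m ℝ} (h : Aᵀ = A)
    (hq : ∀ x, x ≠ 0 → 0 < dotProduct x (A.mulVec x)) : A.PosDef :=
  Matrix.PosDef.of_dotProduct_mulVec_pos (herm_of_symm h) fun x hx => by simpa using hq x hx

lemma posDef_quad {A : Matrix m m ℝ} (hA : A.PosDef) (x : m → ℝ) (hx : x ≠ 0) :
    0 < dotProduct x (A.mulVec x) := by simpa using hA.dotProduct_mulVec_pos hx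

lemma posSemidef_quad {A : Matrix m m ℝ} (hA : A.PosSemidef) (x : m → ℝ) :
    0 ≤ dotProduct x (A.mulVec x) := by simpa using hA.dotProduct_mulVec_nonneg x

lemma sqNorm_smul (c : ℝ) (x : m → ℝ) : sqNorm (c • x) = c ^ 2 * sqNorm x := by
  simp [sqNorm, mul_pow, Finset.mul_sum]

lemma posDef_add_smul_one [DecidableEq m] {A : Matrix m m ℝ} (hA : A.PosDef) {τ : ℝ}
    (hτ : 0 < τ) : (A + τ • 1).PosDef := by
  apply posDef_of_symm_quad
  · rw [Matrix.transpose_add, Matrix.transpose_smul, Matrix.transpose_one, symm_of_herm hA.1]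
  · intro x hx
    rw [Matrix.add_mulVec, Matrix.smul_mulVec, Matrix.one_mulVec, dotProduct_add,
      dotProduct_smul, smul_eq_mul, ← sqNorm_eq_dot]
    have h1 := posDef_quad hA x hx
    have h2 := sqNorm_pos hx
    nlinarith

end aux

set_option maxHeartbeats 1000000 in
/-- Bounds on the deterministic equivalent of the spurious correlation:
`|C^Σ| ≤ min(‖Σ_yx‖_op, λmax(Σ)²/τ, τ √(θ*_xᵀ Σ_xx θ*_x) (λmax(Σ_yy) − λmin(S)) /
(λmin(S) √(λmin(Σ_xx))))`, where `S` is the Schur complement of `Σ` w.r.t. `Σ_xx`. -/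
theorem bounds_on_deterministic_spurious_correlation
    (d : ℕ) (Sxx Sxy Syx Syy : Matrix (Fin d) (Fin d) ℝ)
    (Sig : Matrix (Fin d ⊕ Fin d) (Fin d ⊕ Fin d) ℝ)
    (hSig : Sig = Matrix.fromBlocks Sxx Sxy Syx Syy)
    (hpd : Sig.PosDef)
    (θx : Fin d → ℝ) (hθ : sqNorm (Sum.elim θx (0 : Fin d → ℝ)) = 1)
    (S : Matrix (Fin d) (Fin d) ℝ) (hS : S = Syy - Syx * Sxx⁻¹ * Sxy)
    (τ : ℝ) (hτ : 0 < τ) :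
    |dotProduct (Sum.elim θx (0 : Fin d → ℝ))
        ((Sig * (Sig + τ • 1)⁻¹ * Py d * Sig).mulVec (Sum.elim θx 0))| ≤
      min (opNorm Syx)
        (min (lmax Sig ^ 2 / τ)
          (τ * Real.sqrt (dotProduct θx (Sxx.mulVec θx)) *
            (lmax Syy - lmin S) / (lmin S * Real.sqrt (lmin Sxx)))) := by
  classical
  rcases Nat.eq_zero_or_pos d with hd0 | hd0
  · exfalso
    subst hd0
    simp [sqNorm] at hθ
  haveI : Nonempty (Fin d) := ⟨⟨0, hd0⟩⟩
  set θ : Fin d ⊕ Fin d → ℝ := Sum.elim θx 0 with hθdef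
  have hθ1 : sqNorm θx = 1 := by
    rw [← hθ, hθdef]
    simp [sqNorm, Fintype.sum_sum_type]
  have hθne : θx ≠ 0 := by
    intro h
    rw [h] at hθ1
    simp [sqNorm] at hθ1
  have hθne0 : θ ≠ 0 := by
    intro h
    rw [hθdef] at h
    exact hθne (funext fun i => congrFun h (Sum.inl i))
  -- symmetry of blocks
  have hsym : Sigᵀ = Sig := symm_of_herm hpd.1
  have hbt : Sxxᵀ = Sxx ∧ Syxᵀ = Sxy ∧ Sxyᵀ = Syx ∧ Syyᵀ = Syy := by
    have h := hsym
    rw [hSig, Matrix.fromBlocks_transpose] at h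
    have h4 := Matrix.fromBlocks_inj.mp h
    exact ⟨h4.1, h4.2.1, h4.2.2.1, h4.2.2.2⟩
  obtain ⟨hxx, hyxT, hxyT, hyy⟩ := hbt
  -- quadratic form of Sig on block vectors
  have hquadSig : ∀ p q : Fin d → ℝ,
      dotProduct (Sum.elim p q) (Sig.mulVec (Sum.elim p q)) =
        dotProduct p (Sxx.mulVec p) + dotProduct p (Sxy.mulVec q) +
        dotProduct q (Syx.mulVec p) + dotProduct q (Syy.mulVec q) := by
    intro p q
    rw [hSig, Matrix.fromBlocks_mulVec, Sum.elim_comp_inl, Sum.elim_comp_inr,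
      sumElim_dotProduct_sumElim, dotProduct_add, dotProduct_add]
    ring
  -- positive definiteness of blocks
  have hSxxpd : Sxx.PosDef := by
    apply posDef_of_symm_quad hxx
    intro v hv
    have hne : (Sum.elim v 0 : Fin d ⊕ Fin d → ℝ) ≠ 0 :=
      fun h => hv (funext fun i => congrFun h (Sum.inl i))
    have h := posDef_quad hpd _ hne
    rw [hquadSig v 0] at h
    simpa using h
  have hSyypd : Syy.PosDef := by
    apply posDef_of_symm_quad hyy
    intro v hv
    have hne : (Sum.elim 0 v : Fin d ⊕ Fin d → ℝ) ≠ 0 :=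
      fun h => hv (funext fun i => congrFun h (Sum.inr i))
    have h := posDef_quad hpd _ hne
    rw [hquadSig 0 v] at h
    simpa using h
  have hSxxinv1 : Sxx * Sxx⁻¹ = 1 := Matrix.mul_nonsing_inv _ hSxxpd.det_pos.ne'.isUnit
  have hSxxinv2 : Sxx⁻¹ * Sxx = 1 := Matrix.nonsing_inv_mul _ hSxxpd.det_pos.ne'.isUnit
  have hSxxit : (Sxx⁻¹)ᵀ = Sxx⁻¹ := by rw [Matrix.transpose_nonsing_inv, hxx]
  have hcollapse : ∀ v : Fin d → ℝ,
      dotProduct v ((Syx * Sxx⁻¹ * Sxy).mulVec v) =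
        dotProduct (Sxy.mulVec v) (Sxx⁻¹.mulVec (Sxy.mulVec v)) := by
    intro v
    rw [← Matrix.mulVec_mulVec, ← Matrix.mulVec_mulVec, Matrix.dotProduct_mulVec,
      ← Matrix.mulVec_transpose, hyxT]
  have hSsym : Sᵀ = S := by
    rw [hS, Matrix.transpose_sub, Matrix.transpose_mul, Matrix.transpose_mul, hSxxit, hxyT,
      hyxT, hyy, Matrix.mul_assoc]
  have hSpd : S.PosDef := by
    apply posDef_of_symm_quad hSsym
    intro v hv
    set r : Fin d → ℝ := Sxy.mulVec v with hr
    have hne : (Sum.elim (-(Sxx⁻¹.mulVec r)) v : Fin d ⊕ Fin d → ℝ) ≠ 0 :=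
      fun h => hv (funext fun i => congrFun h (Sum.inr i))
    have hq0 := posDef_quad hpd _ hne
    rw [hquadSig] at hq0
    have hm : Sxx.mulVec (Sxx⁻¹.mulVec r) = r := by
      rw [Matrix.mulVec_mulVec, hSxxinv1, Matrix.one_mulVec]
    have e1 : dotProduct (-(Sxx⁻¹.mulVec r)) (Sxx.mulVec (-(Sxx⁻¹.mulVec r))) =
        dotProduct r (Sxx⁻¹.mulVec r) := by
      rw [Matrix.mulVec_neg, hm, dotProduct_neg, neg_dotProduct, neg_neg,
        dotProduct_comm]
    have e2 : dotProduct (-(Sxx⁻¹.mulVec r)) (Sxy.mulVec v) =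
        -(dotProduct r (Sxx⁻¹.mulVec r)) := by
      rw [neg_dotProduct, ← hr, dotProduct_comm]
    have e3 : dotProduct v (Syx.mulVec (-(Sxx⁻¹.mulVec r))) =
        -(dotProduct r (Sxx⁻¹.mulVec r)) := by
      rw [Matrix.mulVec_neg, dotProduct_neg, Matrix.dotProduct_mulVec,
        ← Matrix.mulVec_transpose, hyxT, ← hr]
    rw [e1, e2, e3] at hq0
    have e4 : dotProduct v (S.mulVec v) =
        dotProduct v (Syy.mulVec v) - dotProduct r (Sxx⁻¹.mulVec r) := by
      rw [hS, Matrix.sub_mulVec, dotProduct_sub, hcollapse, ← hr]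
    rw [e4]
    linarith
  -- the resolvent
  set N : Matrix (Fin d ⊕ Fin d) (Fin d ⊕ Fin d) ℝ := Sig + τ • 1 with hN
  have hNpd : N.PosDef := posDef_add_smul_one hpd hτ
  have hNsym : Nᵀ = N := by
    rw [hN, Matrix.transpose_add, Matrix.transpose_smul, Matrix.transpose_one, hsym]
  set M : Matrix (Fin d ⊕ Fin d) (Fin d ⊕ Fin d) ℝ := N⁻¹ with hM
  have hNM : N * M = 1 := Matrix.mul_nonsing_inv _ hNpd.det_pos.ne'.isUnit
  have hMN : M * N = 1 := Matrix.nonsing_inv_mul _ hNpd.det_pos.ne'.isUnit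
  have hMsym : Mᵀ = M := by rw [hM, Matrix.transpose_nonsing_inv, hNsym]
  set u : Fin d → ℝ := Syx.mulVec θx with hu
  set bb : Fin d ⊕ Fin d → ℝ := Sum.elim 0 u with hbb
  set w : Fin d ⊕ Fin d → ℝ := M.mulVec bb with hw
  set wx : Fin d → ℝ := w ∘ Sum.inl with hwx
  set wy : Fin d → ℝ := w ∘ Sum.inr with hwy
  have hSigθ : Sig.mulVec θ = Sum.elim (Sxx.mulVec θx) u := by
    rw [hθdef, hSig, Matrix.fromBlocks_mulVec, Sum.elim_comp_inl, Sum.elim_comp_inr,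
      Matrix.mulVec_zero, Matrix.mulVec_zero, add_zero, add_zero, hu]
  have hPyb : (Py d).mulVec (Sum.elim (Sxx.mulVec θx) u) = bb := by
    rw [Py, Matrix.fromBlocks_mulVec, Sum.elim_comp_inl, Sum.elim_comp_inr, hbb]
    simp
  have hC0 : dotProduct θ ((Sig * M * Py d * Sig).mulVec θ) =
      dotProduct θ ((Sig * M).mulVec bb) := by
    rw [Matrix.mul_assoc (Sig * M) (Py d) Sig, ← Matrix.mulVec_mulVec θ (Sig * M) (Py d * Sig),
      ← Matrix.mulVec_mulVec θ (Py d) Sig, hSigθ, hPyb]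
  have hC : dotProduct θ ((Sig * M * Py d * Sig).mulVec θ) =
      dotProduct (Sig.mulVec θ) w := by
    rw [hC0, ← Matrix.mulVec_mulVec, dot_mulVec_symm hsym, ← hw]
  have hSM : Sig * M = 1 - τ • M := by
    have h := hNM
    rw [hN, Matrix.add_mul, Matrix.smul_mul, Matrix.one_mul] at h
    exact eq_sub_of_add_eq h
  have hθbb : dotProduct θ bb = 0 := by
    rw [hθdef, hbb, sumElim_dotProduct_sumElim]
    simp
  have hθw : dotProduct θ w = dotProduct θx wx := by
    rw [hθdef, ← Sum.elim_comp_inl_inr w, sumElim_dotProduct_sumElim, ← hwx]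
    simp
  have hCval : dotProduct θ ((Sig * M * Py d * Sig).mulVec θ) =
      -(τ * dotProduct θx wx) := by
    rw [hC0, hSM, Matrix.sub_mulVec, Matrix.one_mulVec, Matrix.smul_mulVec,
      dotProduct_sub, dotProduct_smul, ← hw, hθbb, hθw, smul_eq_mul]
    ring
  -- block equations
  set Axτ : Matrix (Fin d) (Fin d) ℝ := Sxx + τ • 1 with hAxτ
  have hAxτpd : Axτ.PosDef := posDef_add_smul_one hSxxpd hτ
  have hAxτsym : Axτᵀ = Axτ := by
    rw [hAxτ, Matrix.transpose_add, Matrix.transpose_smul, Matrix.transpose_one, hxx]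
  have hAx1 : Axτ * Axτ⁻¹ = 1 := Matrix.mul_nonsing_inv _ hAxτpd.det_pos.ne'.isUnit
  have hAx2 : Axτ⁻¹ * Axτ = 1 := Matrix.nonsing_inv_mul _ hAxτpd.det_pos.ne'.isUnit
  have hAxit : (Axτ⁻¹)ᵀ = Axτ⁻¹ := by rw [Matrix.transpose_nonsing_inv, hAxτsym]
  have hNblocks : N = Matrix.fromBlocks Axτ Sxy Syx (Syy + τ • 1) := by
    rw [hN, hSig, ← Matrix.fromBlocks_one, Matrix.fromBlocks_smul, Matrix.fromBlocks_add,
      hAxτ]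
    simp
  have hNw : N.mulVec w = bb := by
    rw [hw, Matrix.mulVec_mulVec, hNM, Matrix.one_mulVec]
  have hblockEq := hNw
  rw [hNblocks, ← Sum.elim_comp_inl_inr w, Matrix.fromBlocks_mulVec, Sum.elim_comp_inl,
    Sum.elim_comp_inr, ← hwx, ← hwy, hbb] at hblockEq
  have hE1 : Axτ.mulVec wx + Sxy.mulVec wy = 0 :=
    funext fun i => congrFun hblockEq (Sum.inl i)
  have hE2 : Syx.mulVec wx + (Syy + τ • 1).mulVec wy = u :=
    funext fun i => congrFun hblockEq (Sum.inr i)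
  have hwx_eq : wx = -(Axτ⁻¹.mulVec (Sxy.mulVec wy)) := by
    have h1 : Axτ.mulVec wx = -(Sxy.mulVec wy) := eq_neg_of_add_eq_zero_left hE1
    have h2 : Axτ⁻¹.mulVec (Axτ.mulVec wx) = wx := by
      rw [Matrix.mulVec_mulVec, hAx2, Matrix.one_mulVec]
    rw [← h2, h1, Matrix.mulVec_neg]
  set z : Fin d → ℝ := Axτ⁻¹.mulVec θx with hz
  set v : Fin d → ℝ := Syx.mulVec z with hv
  have hθxwx : dotProduct θx wx = -(dotProduct v wy) := by
    rw [hwx_eq, dotProduct_neg, dot_mulVec_symm hAxit, ← hz,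
      Matrix.dotProduct_mulVec, ← Matrix.mulVec_transpose, hxyT, ← hv]
  have hCval2 : dotProduct θ ((Sig * M * Py d * Sig).mulVec θ) =
      τ * dotProduct v wy := by
    rw [hCval, hθxwx]
    ring
  -- spectral quantities
  have hlS : 0 < lmin S := lmin_pos_of_posDef hSpd
  have hlx : 0 < lmin Sxx := lmin_pos_of_posDef hSxxpd
  have htθ : 0 < dotProduct θx (Sxx.mulVec θx) := posDef_quad hSxxpd θx hθne
  have hD : lmin S ≤ lmax Syy := by
    obtain ⟨e, he⟩ := exists_unit (inferInstance : Nonempty (Fin d))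
    have h1 := lmin_smul_le_quad S e
    have h2 : dotProduct e (S.mulVec e) ≤ dotProduct e (Syy.mulVec e) := by
      rw [hS, Matrix.sub_mulVec, dotProduct_sub]
      have h3 := hcollapse e
      have h4 := posSemidef_quad hSxxpd.inv.posSemidef (Sxy.mulVec e)
      linarith
    have h5 := quad_le_lmax Syy e
    rw [he] at h1 h5
    linarith
  have hD0 : 0 ≤ lmax Syy - lmin S := by linarith
  -- key Cauchy–Schwarz consequence
  have hkey : ∀ c : Fin d → ℝ,
      sqNorm (Syx.mulVec c) ^ 2 ≤
        ((lmax Syy - lmin S) * sqNorm (Syx.mulVec c)) * dotProduct c (Sxx.mulVec c) := by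
    intro c
    have h1 : dotProduct (Sxy.mulVec (Syx.mulVec c)) c = sqNorm (Syx.mulVec c) := by
      rw [mulVec_dot, hxyT, sqNorm_eq_dot]
    have h2 := pd_cauchy hSxxpd (Sxy.mulVec (Syx.mulVec c)) c
    have h3 : dotProduct (Sxy.mulVec (Syx.mulVec c))
        (Sxx⁻¹.mulVec (Sxy.mulVec (Syx.mulVec c))) ≤
        (lmax Syy - lmin S) * sqNorm (Syx.mulVec c) := by
      rw [← hcollapse (Syx.mulVec c)]
      have h4 : Syx * Sxx⁻¹ * Sxy = Syy - S := by rw [hS, sub_sub_cancel]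
      rw [h4, Matrix.sub_mulVec, dotProduct_sub]
      have h5 := quad_le_lmax Syy (Syx.mulVec c)
      have h6 := lmin_smul_le_quad S (Syx.mulVec c)
      linarith
    calc sqNorm (Syx.mulVec c) ^ 2 = dotProduct (Sxy.mulVec (Syx.mulVec c)) c ^ 2 := by
          rw [h1]
      _ ≤ _ := h2
      _ ≤ ((lmax Syy - lmin S) * sqNorm (Syx.mulVec c)) * dotProduct c (Sxx.mulVec c) :=
          mul_le_mul_of_nonneg_right h3 (posSemidef_quad hSxxpd.posSemidef c)
  have hdiv : ∀ a b : ℝ, 0 ≤ b → a ^ 2 ≤ b * a → a ≤ b := by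
    intro a b hb h
    rcases le_or_gt a 0 with h0 | h0
    · linarith
    · nlinarith
  have hub : sqNorm u ≤ (lmax Syy - lmin S) * dotProduct θx (Sxx.mulVec θx) := by
    apply hdiv _ _ (mul_nonneg hD0 htθ.le)
    have h := hkey θx
    rw [← hu] at h
    linarith [h]
  have hvb : sqNorm v ≤ (lmax Syy - lmin S) * dotProduct z (Sxx.mulVec z) := by
    apply hdiv _ _ (mul_nonneg hD0 (posSemidef_quad hSxxpd.posSemidef z))
    have h := hkey z
    rw [← hv] at h
    linarith [h]
  -- comparison of the two inverses
  have hkAA : dotProduct (Sxy.mulVec wy) (Axτ⁻¹.mulVec (Sxy.mulVec wy)) ≤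
      dotProduct (Sxy.mulVec wy) (Sxx⁻¹.mulVec (Sxy.mulVec wy)) := by
    have he : Axτ * Sxx = Sxx * Sxx + τ • Sxx := by
      rw [hAxτ, Matrix.add_mul, Matrix.smul_mul, Matrix.one_mul]
    have hASpd : (Axτ * Sxx).PosDef := by
      apply posDef_of_symm_quad
      · rw [he, Matrix.transpose_add, Matrix.transpose_smul, Matrix.transpose_mul, hxx]
      · intro x hx
        rw [he, Matrix.add_mulVec, dotProduct_add, Matrix.smul_mulVec,
          dotProduct_smul, smul_eq_mul]
        have h1 : dotProduct x ((Sxx * Sxx).mulVec x) = sqNorm (Sxx.mulVec x) := by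
          rw [← Matrix.mulVec_mulVec, dot_mulVec_symm hxx, sqNorm_eq_dot]
        rw [h1]
        have h2 := posDef_quad hSxxpd x hx
        have h3 := sqNorm_nonneg (Sxx.mulVec x)
        nlinarith
    have hdiffe : Sxx⁻¹ - Axτ⁻¹ = τ • (Axτ * Sxx)⁻¹ := by
      have h1 : Sxx⁻¹ * (Axτ - Sxx) * Axτ⁻¹ = Sxx⁻¹ - Axτ⁻¹ := by
        calc Sxx⁻¹ * (Axτ - Sxx) * Axτ⁻¹ = (Sxx⁻¹ * Axτ - Sxx⁻¹ * Sxx) * Axτ⁻¹ := by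
              rw [Matrix.mul_sub]
          _ = Sxx⁻¹ * Axτ * Axτ⁻¹ - 1 * Axτ⁻¹ := by rw [Matrix.sub_mul, hSxxinv2]
          _ = Sxx⁻¹ * (Axτ * Axτ⁻¹) - Axτ⁻¹ := by rw [Matrix.one_mul, Matrix.mul_assoc]
          _ = Sxx⁻¹ - Axτ⁻¹ := by rw [hAx1, Matrix.mul_one]
      have h2 : Axτ - Sxx = τ • 1 := by rw [hAxτ, add_sub_cancel_left]
      rw [← h1, h2, Matrix.mul_inv_rev]
      rw [mul_smul_comm, smul_mul_assoc, Matrix.mul_one]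
    have h3 := posSemidef_quad hASpd.inv.posSemidef (Sxy.mulVec wy)
    have h4 : dotProduct (Sxy.mulVec wy) ((Sxx⁻¹ - Axτ⁻¹).mulVec (Sxy.mulVec wy)) =
        τ * dotProduct (Sxy.mulVec wy) ((Axτ * Sxx)⁻¹.mulVec (Sxy.mulVec wy)) := by
      rw [hdiffe, Matrix.smul_mulVec, dotProduct_smul, smul_eq_mul]
    rw [Matrix.sub_mulVec, dotProduct_sub] at h4
    have h5 : 0 ≤ τ * dotProduct (Sxy.mulVec wy)
        ((Axτ * Sxx)⁻¹.mulVec (Sxy.mulVec wy)) := mul_nonneg hτ.le h3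
    linarith
  -- lower bound for wy ⬝ u
  have hwyu : lmin S * sqNorm wy ≤ dotProduct wy u := by
    have h1 : dotProduct wy u =
        dotProduct wy (Syy.mulVec wy) + τ * sqNorm wy -
          dotProduct (Sxy.mulVec wy) (Axτ⁻¹.mulVec (Sxy.mulVec wy)) := by
      rw [← hE2, dotProduct_add]
      have h2 : dotProduct wy (Syx.mulVec wx) =
          -(dotProduct (Sxy.mulVec wy) (Axτ⁻¹.mulVec (Sxy.mulVec wy))) := by
        rw [hwx_eq, Matrix.mulVec_neg, dotProduct_neg]
        congr 1
        rw [Matrix.dotProduct_mulVec, ← Matrix.mulVec_transpose, hyxT]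
      have h3 : dotProduct wy ((Syy + τ • 1).mulVec wy) =
          dotProduct wy (Syy.mulVec wy) + τ * sqNorm wy := by
        rw [Matrix.add_mulVec, dotProduct_add, Matrix.smul_mulVec,
          Matrix.one_mulVec, dotProduct_smul, smul_eq_mul, ← sqNorm_eq_dot]
      rw [h2, h3]
      ring
    have h4 : dotProduct wy (S.mulVec wy) =
        dotProduct wy (Syy.mulVec wy) -
          dotProduct (Sxy.mulVec wy) (Sxx⁻¹.mulVec (Sxy.mulVec wy)) := by
      rw [hS, Matrix.sub_mulVec, dotProduct_sub, hcollapse]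
    have h5 := lmin_smul_le_quad S wy
    have h6 := sqNorm_nonneg wy
    have h7 : 0 ≤ τ * sqNorm wy := mul_nonneg hτ.le h6
    linarith [hkAA]
  have hwyb : Real.sqrt (sqNorm wy) ≤ Real.sqrt (sqNorm u) / lmin S := by
    have h7 := dot_le wy u
    have h8 : sqNorm wy = Real.sqrt (sqNorm wy) ^ 2 := (Real.sq_sqrt (sqNorm_nonneg wy)).symm
    rw [le_div_iff₀ hlS]
    rcases eq_or_lt_of_le (Real.sqrt_nonneg (sqNorm wy)) with h9 | h9
    · rw [← h9, zero_mul]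
      exact Real.sqrt_nonneg _
    · nlinarith [hwyu, h7, h8, h9]
  -- bound on the quadratic form at z
  have hAz : Axτ.mulVec z = θx := by rw [hz, Matrix.mulVec_mulVec, hAx1, Matrix.one_mulVec]
  have hSxz0 : 0 ≤ dotProduct (Sxx.mulVec z) (τ • z) := by
    rw [dotProduct_smul, smul_eq_mul, mulVec_dot, hxx]
    exact mul_nonneg hτ.le (posSemidef_quad hSxxpd.posSemidef z)
  have hSxz1 : sqNorm (Sxx.mulVec z) ≤ 1 := by
    have h1 : Sxx.mulVec z + τ • z = θx := by
      rw [← hAz, hAxτ, Matrix.add_mulVec, Matrix.smul_mulVec, Matrix.one_mulVec]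
    have h2 := sqNorm_add (Sxx.mulVec z) (τ • z)
    rw [h1, hθ1] at h2
    have h3 := sqNorm_nonneg (τ • z)
    linarith [hSxz0]
  have hzb : dotProduct z (Sxx.mulVec z) ≤ 1 / lmin Sxx := by
    have h1 := lmin_smul_le_quad Sxx z
    have h2 := dot_le z (Sxx.mulVec z)
    have h3 : Real.sqrt (sqNorm (Sxx.mulVec z)) ≤ 1 := by
      calc Real.sqrt (sqNorm (Sxx.mulVec z)) ≤ Real.sqrt 1 := Real.sqrt_le_sqrt hSxz1
        _ = 1 := Real.sqrt_one
    have h4 : sqNorm z = Real.sqrt (sqNorm z) ^ 2 := (Real.sq_sqrt (sqNorm_nonneg z)).symm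
    rcases eq_or_lt_of_le (Real.sqrt_nonneg (sqNorm z)) with h5 | h5
    · have h6 : dotProduct z (Sxx.mulVec z) ≤ 0 := by
        have := Real.sqrt_nonneg (sqNorm (Sxx.mulVec z))
        nlinarith [h2]
      have h7 : 0 < 1 / lmin Sxx := by positivity
      linarith
    · have h6 : lmin Sxx * Real.sqrt (sqNorm z) ≤ Real.sqrt (sqNorm (Sxx.mulVec z)) := by
        nlinarith [h1, h2, h4, h5]
      have h7 : lmin Sxx * Real.sqrt (sqNorm z) ≤ 1 := le_trans h6 h3
      rw [le_div_iff₀ hlx]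
      have h8 : dotProduct z (Sxx.mulVec z) ≤ Real.sqrt (sqNorm z) := by
        nlinarith [h2, h3, Real.sqrt_nonneg (sqNorm z)]
      nlinarith [h7, h8, hlx, h5]
  -- Bound 3
  have hb3 : |dotProduct θ ((Sig * M * Py d * Sig).mulVec θ)| ≤
      τ * Real.sqrt (dotProduct θx (Sxx.mulVec θx)) * (lmax Syy - lmin S) /
        (lmin S * Real.sqrt (lmin Sxx)) := by
    rw [hCval2, abs_mul, abs_of_pos hτ]
    have h1 := abs_dot_le v wy
    have h2 : Real.sqrt (sqNorm v) ≤
        Real.sqrt (lmax Syy - lmin S) / Real.sqrt (lmin Sxx) := by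
      calc Real.sqrt (sqNorm v) ≤ Real.sqrt ((lmax Syy - lmin S) * (1 / lmin Sxx)) := by
            apply Real.sqrt_le_sqrt
            calc sqNorm v ≤ (lmax Syy - lmin S) * dotProduct z (Sxx.mulVec z) := hvb
              _ ≤ (lmax Syy - lmin S) * (1 / lmin Sxx) :=
                  mul_le_mul_of_nonneg_left hzb hD0
        _ = Real.sqrt (lmax Syy - lmin S) / Real.sqrt (lmin Sxx) := by
            rw [Real.sqrt_mul hD0, one_div, Real.sqrt_inv, div_eq_mul_inv]
    have h3 : Real.sqrt (sqNorm wy) ≤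
        Real.sqrt (lmax Syy - lmin S) *
          Real.sqrt (dotProduct θx (Sxx.mulVec θx)) / lmin S := by
      calc Real.sqrt (sqNorm wy) ≤ Real.sqrt (sqNorm u) / lmin S := hwyb
        _ ≤ Real.sqrt ((lmax Syy - lmin S) * dotProduct θx (Sxx.mulVec θx)) / lmin S := by
            gcongr
        _ = Real.sqrt (lmax Syy - lmin S) *
              Real.sqrt (dotProduct θx (Sxx.mulVec θx)) / lmin S := by
            rw [Real.sqrt_mul hD0]
    have hcomb : Real.sqrt (sqNorm v) * Real.sqrt (sqNorm wy) ≤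
        (Real.sqrt (lmax Syy - lmin S) / Real.sqrt (lmin Sxx)) *
          (Real.sqrt (lmax Syy - lmin S) *
            Real.sqrt (dotProduct θx (Sxx.mulVec θx)) / lmin S) :=
      mul_le_mul h2 h3 (Real.sqrt_nonneg _) (by positivity)
    have hss : Real.sqrt (lmax Syy - lmin S) * Real.sqrt (lmax Syy - lmin S) =
        lmax Syy - lmin S := Real.mul_self_sqrt hD0
    have hid : (Real.sqrt (lmax Syy - lmin S) / Real.sqrt (lmin Sxx)) *
        (Real.sqrt (lmax Syy - lmin S) *
          Real.sqrt (dotProduct θx (Sxx.mulVec θx)) / lmin S) =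
        Real.sqrt (dotProduct θx (Sxx.mulVec θx)) * (lmax Syy - lmin S) /
          (lmin S * Real.sqrt (lmin Sxx)) := by
      have hnum : Real.sqrt (lmax Syy - lmin S) * (Real.sqrt (lmax Syy - lmin S) *
          Real.sqrt (dotProduct θx (Sxx.mulVec θx))) =
          Real.sqrt (dotProduct θx (Sxx.mulVec θx)) * (lmax Syy - lmin S) := by
        rw [← mul_assoc, hss]
        ring
      rw [div_mul_div_comm, hnum, mul_comm (Real.sqrt (lmin Sxx)) (lmin S)]
    calc τ * |dotProduct v wy|
        ≤ τ * (Real.sqrt (sqNorm v) * Real.sqrt (sqNorm wy)) :=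
          mul_le_mul_of_nonneg_left h1 hτ.le
      _ ≤ τ * ((Real.sqrt (lmax Syy - lmin S) / Real.sqrt (lmin Sxx)) *
            (Real.sqrt (lmax Syy - lmin S) *
              Real.sqrt (dotProduct θx (Sxx.mulVec θx)) / lmin S)) :=
          mul_le_mul_of_nonneg_left hcomb hτ.le
      _ = τ * Real.sqrt (dotProduct θx (Sxx.mulVec θx)) * (lmax Syy - lmin S) /
            (lmin S * Real.sqrt (lmin Sxx)) := by
          rw [hid]
          ring
  -- Bound 1
  have hb1 : |dotProduct θ ((Sig * M * Py d * Sig).mulVec θ)| ≤ opNorm Syx := by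
    have hNS : Sig * N = N * Sig := by
      rw [hN, Matrix.mul_add, Matrix.add_mul, mul_smul_comm, smul_mul_assoc, Matrix.mul_one,
        Matrix.one_mul]
    have hcomm : M * Sig = Sig * M := by
      calc M * Sig = M * Sig * 1 := by rw [Matrix.mul_one]
        _ = M * Sig * (N * M) := by rw [hNM]
        _ = M * (Sig * N) * M := by simp only [Matrix.mul_assoc]
        _ = M * (N * Sig) * M := by rw [hNS]
        _ = M * N * (Sig * M) := by simp only [Matrix.mul_assoc]
        _ = Sig * M := by rw [hMN, Matrix.one_mul]
    have hC1 : dotProduct θ ((Sig * M * Py d * Sig).mulVec θ) =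
        dotProduct (Sig.mulVec (M.mulVec θ)) bb := by
      rw [hC, hw, dot_mulVec_symm hMsym, Matrix.mulVec_mulVec, hcomm, ← Matrix.mulVec_mulVec]
    have hgn : sqNorm (Sig.mulVec (M.mulVec θ)) ≤ 1 := by
      have hθp : Sig.mulVec (M.mulVec θ) + τ • M.mulVec θ = θ := by
        have h0 : N.mulVec (M.mulVec θ) = θ := by
          rw [Matrix.mulVec_mulVec, hNM, Matrix.one_mulVec]
        calc Sig.mulVec (M.mulVec θ) + τ • M.mulVec θ = N.mulVec (M.mulVec θ) := by
              rw [hN, Matrix.add_mulVec, Matrix.smul_mulVec, Matrix.one_mulVec]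
          _ = θ := h0
      have h2 := sqNorm_add (Sig.mulVec (M.mulVec θ)) (τ • M.mulVec θ)
      rw [hθp, hθ] at h2
      have h3 : 0 ≤ dotProduct (Sig.mulVec (M.mulVec θ)) (τ • M.mulVec θ) := by
        rw [dotProduct_smul, smul_eq_mul, mulVec_dot, hsym]
        exact mul_nonneg hτ.le (posSemidef_quad hpd.posSemidef _)
      have h4 := sqNorm_nonneg (τ • M.mulVec θ)
      linarith
    have hbbn : sqNorm bb = sqNorm u := by
      rw [hbb]
      simp [sqNorm, Fintype.sum_sum_type]
    have hop : Real.sqrt (sqNorm u) ≤ opNorm Syx := by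
      have h := sqrt_sqNorm_mulVec_le_opNorm Syx hθ1
      rw [← hu] at h
      exact h
    rw [hC1]
    calc |dotProduct (Sig.mulVec (M.mulVec θ)) bb|
        ≤ Real.sqrt (sqNorm (Sig.mulVec (M.mulVec θ))) * Real.sqrt (sqNorm bb) :=
          abs_dot_le _ _
      _ ≤ 1 * opNorm Syx := by
          apply mul_le_mul _ _ (Real.sqrt_nonneg _) zero_le_one
          · calc Real.sqrt (sqNorm (Sig.mulVec (M.mulVec θ))) ≤ Real.sqrt 1 :=
                  Real.sqrt_le_sqrt hgn
              _ = 1 := Real.sqrt_one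
          · rw [hbbn]
            exact hop
      _ = opNorm Syx := one_mul _
  -- Bound 2
  have hlmaxpos : 0 < lmax Sig := by
    have h1 := posDef_quad hpd θ hθne0
    have h2 := quad_le_lmax Sig θ
    rw [hθ] at h2
    linarith
  have hb2 : |dotProduct θ ((Sig * M * Py d * Sig).mulVec θ)| ≤ lmax Sig ^ 2 / τ := by
    rw [hC]
    have hSn : sqNorm (Sig.mulVec θ) ≤ lmax Sig ^ 2 := by
      have h := sqNorm_mulVec_le_of_symm hsym (posSemidef_quad hpd.posSemidef) hlmaxpos.le θ
      rw [hθ] at h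
      linarith
    have hbble : sqNorm bb ≤ sqNorm (Sig.mulVec θ) := by
      rw [hSigθ, hbb]
      simp only [sqNorm, Fintype.sum_sum_type, Sum.elim_inl, Sum.elim_inr, Pi.zero_apply]
      have h := Finset.sum_nonneg (fun i (_ : i ∈ Finset.univ) =>
        sq_nonneg ((Sxx.mulVec θx) i))
      simp only [ne_eq, OfNat.ofNat_ne_zero, not_false_eq_true, zero_pow, Finset.sum_const_zero]
      linarith
    have hwle : sqNorm w ≤ sqNorm bb / τ ^ 2 := by
      have hbw2 : Sig.mulVec w + τ • w = bb := by
        rw [← hNw, hN, Matrix.add_mulVec, Matrix.smul_mulVec, Matrix.one_mulVec]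
      have h2 := sqNorm_add (Sig.mulVec w) (τ • w)
      rw [hbw2] at h2
      have h3 : 0 ≤ dotProduct (Sig.mulVec w) (τ • w) := by
        rw [dotProduct_smul, smul_eq_mul, mulVec_dot, hsym]
        exact mul_nonneg hτ.le (posSemidef_quad hpd.posSemidef _)
      have h4 := sqNorm_nonneg (Sig.mulVec w)
      have h5 := sqNorm_smul τ w
      have hτ2 : (0:ℝ) < τ ^ 2 := by positivity
      rw [le_div_iff₀ hτ2]
      linarith
    calc |dotProduct (Sig.mulVec θ) w|
        ≤ Real.sqrt (sqNorm (Sig.mulVec θ)) * Real.sqrt (sqNorm w) := abs_dot_le _ _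
      _ ≤ lmax Sig * (lmax Sig / τ) := by
          apply mul_le_mul _ _ (Real.sqrt_nonneg _) hlmaxpos.le
          · calc Real.sqrt (sqNorm (Sig.mulVec θ)) ≤ Real.sqrt (lmax Sig ^ 2) :=
                  Real.sqrt_le_sqrt hSn
              _ = lmax Sig := Real.sqrt_sq hlmaxpos.le
          · have h6 : sqNorm w ≤ lmax Sig ^ 2 / τ ^ 2 := by
              refine hwle.trans ?_
              gcongr
              exact hbble.trans hSn
            calc Real.sqrt (sqNorm w) ≤ Real.sqrt (lmax Sig ^ 2 / τ ^ 2) :=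
                  Real.sqrt_le_sqrt h6
              _ = lmax Sig / τ := by
                  rw [show lmax Sig ^ 2 / τ ^ 2 = (lmax Sig / τ) ^ 2 by ring,
                    Real.sqrt_sq (by positivity)]
      _ = lmax Sig ^ 2 / τ := by ring
  exact le_min hb1 (le_min hb2 hb3)

end
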